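/- There exists a simple 6-layer ACR-GNN N with input dimension 0 such that for every pointed 0-featured directed graph (G, v): N(G, v) = 1 if and only if G is a strict linear order. -/

import Mathlib

/-- A `d`-featured directed graph: finite nonempty vertex set, edge relation,
and a feature map into `{0,1}^d` (represented as `Fin d → Bool`). -/
structure FGraph (d : ℕ) where
  V : Type
  [fintypeV : Fintype V]
  nonemptyV : Nonempty V
  E : V → V → Prop
  f : V → Fin d → Bool

attribute [instance] FGraph.fintypeV

/-- `c`-graded `L`-turn bisimilarity between pointed `d`-featured graphs. -/
def bisim (d c : ℕ) : (L : ℕ) → (G₁ G₂ : FGraph d) → G₁.V → G₂.V → Prop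
  | 0, G₁, G₂, v₁, v₂ => G₁.f v₁ = G₂.f v₂
  | L + 1, G₁, G₂, v₁, v₂ =>
      G₁.f v₁ = G₂.f v₂ ∧
      (∀ k, k ≤ c → ∀ u₁ : Fin k → G₁.V, Function.Injective u₁ →
        (∀ i, G₁.E v₁ (u₁ i)) →
        ∃ u₂ : Fin k → G₂.V, Function.Injective u₂ ∧ (∀ i, G₂.E v₂ (u₂ i)) ∧
          ∀ i, bisim d c L G₁ G₂ (u₁ i) (u₂ i)) ∧
      (∀ k, k ≤ c → ∀ u₂ : Fin k → G₂.V, Function.Injective u₂ →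
        (∀ i, G₂.E v₂ (u₂ i)) →
        ∃ u₁ : Fin k → G₁.V, Function.Injective u₁ ∧ (∀ i, G₁.E v₁ (u₁ i)) ∧
          ∀ i, bisim d c L G₁ G₂ (u₁ i) (u₂ i))

/-- `∼^{L,c,*}_∃` : `c`-graded `L`-turn bisimilarity with (unbounded) global counting. -/
def bisimStar (d c L : ℕ) (G₁ G₂ : FGraph d) (v₁ : G₁.V) (v₂ : G₂.V) : Prop :=
  bisim d c L G₁ G₂ v₁ v₂ ∧
  (∀ u : G₁.V,
    Set.ncard {u₁ : G₁.V | bisim d c L G₁ G₁ u₁ u} =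
      Set.ncard {u₂ : G₂.V | bisim d c L G₂ G₁ u₂ u}) ∧
  (∀ u : G₂.V,
    Set.ncard {u₁ : G₁.V | bisim d c L G₁ G₂ u₁ u} =
      Set.ncard {u₂ : G₂.V | bisim d c L G₂ G₂ u₂ u})

/-- `∼^{L,c,q}_∃` : `c`-graded `L`-turn bisimilarity with global counting bounded by `q`. -/
def bisimQ (d c L q : ℕ) (G₁ G₂ : FGraph d) (v₁ : G₁.V) (v₂ : G₂.V) : Prop :=
  bisim d c L G₁ G₂ v₁ v₂ ∧
  (∀ u : G₁.V,
    min (Set.ncard {u₁ : G₁.V | bisim d c L G₁ G₁ u₁ u}) q =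
      min (Set.ncard {u₂ : G₂.V | bisim d c L G₂ G₁ u₂ u}) q) ∧
  (∀ u : G₂.V,
    min (Set.ncard {u₁ : G₁.V | bisim d c L G₁ G₂ u₁ u}) q =
      min (Set.ncard {u₂ : G₂.V | bisim d c L G₂ G₂ u₂ u}) q)
/-- The `c`-restriction of a multiset: every multiplicity is capped at `c`. -/
noncomputable def mcap {α : Type*} (c : ℕ) (M : Multiset α) : Multiset α :=
  letI := Classical.decEq α
  M.toFinset.val.bind fun x => Multiset.replicate (min (M.count x) c) x

/-- A function on finite multisets is `c`-bounded if it only depends on the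
`c`-restriction of its argument. -/
def CBounded {α β : Type*} (c : ℕ) (F : Multiset α → β) : Prop :=
  ∀ M : Multiset α, F M = F (mcap c M)

/-- An `L`-layer aggregate-combine-readout GNN with input dimension `d`. -/
structure ACRGNN (d L : ℕ) where
  dims : ℕ → ℕ
  dims_zero : dims 0 = d
  agg : (i : ℕ) → Multiset (Fin (dims i) → ℝ) → (Fin (dims i) → ℝ)
  read : (i : ℕ) → Multiset (Fin (dims i) → ℝ) → (Fin (dims i) → ℝ)
  comb : (i : ℕ) → (Fin (dims i) → ℝ) → (Fin (dims i) → ℝ) → (Fin (dims i) → ℝ) →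
    (Fin (dims (i + 1)) → ℝ)
  cls : (Fin (dims L) → ℝ) → Bool

open Classical in
/-- The feature embeddings computed layer by layer by an ACR-GNN on a `d`-featured graph. -/
noncomputable def ACRGNN.emb {d L : ℕ} (N : ACRGNN d L) (G : FGraph d) :
    (i : ℕ) → G.V → (Fin (N.dims i) → ℝ)
  | 0 => fun v j => if G.f v (Fin.cast N.dims_zero j) then 1 else 0
  | i + 1 => fun v =>
      N.comb i (N.emb G i v)
        (N.agg i ((Finset.univ.filter (fun u => G.E v u)).val.map (N.emb G i)))
        (N.read i (Finset.univ.val.map (N.emb G i)))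

/-- Acceptance of a pointed featured graph by an ACR-GNN. -/
noncomputable def ACRGNN.accepts {d L : ℕ} (N : ACRGNN d L) (G : FGraph d) (v : G.V) : Bool :=
  N.cls (N.emb G L v)

/-- Dimension-wise multiset sum. -/
def sumAgg (n : ℕ) : Multiset (Fin n → ℝ) → (Fin n → ℝ) :=
  fun M j => (M.map fun x => x j).sum

/-- A simple ACR-GNN: sum aggregation and readout, combination functions of the form
`ReLU(x₁A + x₂C + x₃R + b)`, and a linear threshold classifier on `ℝ`. -/
def ACRGNN.IsSimple {d L : ℕ} (N : ACRGNN d L) : Prop :=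
  (∀ i, N.agg i = sumAgg (N.dims i)) ∧
  (∀ i, N.read i = sumAgg (N.dims i)) ∧
  (∀ i, ∃ (A C R : Matrix (Fin (N.dims i)) (Fin (N.dims (i + 1))) ℝ)
      (b : Fin (N.dims (i + 1)) → ℝ),
      ∀ x₁ x₂ x₃ j, N.comb i x₁ x₂ x₃ j =
        max 0 (Matrix.vecMul x₁ A j + Matrix.vecMul x₂ C j + Matrix.vecMul x₃ R j + b j)) ∧
  N.dims L = 1 ∧
  ∃ (a : Fin (N.dims L) → ℝ) (t : ℝ), ∀ x, N.cls x = decide (0 ≤ ∑ j, a j * x j + t)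
/-- A binary relation is a strict linear order if it is irreflexive, transitive
and total. -/
def IsSLO {V : Type} (E : V → V → Prop) : Prop :=
  (∀ v, ¬ E v v) ∧ (∀ u v w, E u v → E v w → E u w) ∧
  (∀ u v : V, u ≠ v → E u v ∨ E v u)
namespace S6
open Matrix Finset

@[reducible] def dims : ℕ → ℕ
  | 0 => 0 | 1 => 1 | 2 => 2 | 3 => 4 | 4 => 6 | 5 => 4 | _ => 1

example : dims 6 = 1 := rfl
example (k : ℕ) : dims (k+6) = 1 := rfl

noncomputable def A1 : Matrix (Fin 1) (Fin 2) ℝ := ![![1, 0]]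
noncomputable def C1 : Matrix (Fin 1) (Fin 2) ℝ := ![![0, 1]]
noncomputable def A2 : Matrix (Fin 2) (Fin 4) ℝ := ![![1,0,0,0], ![0,0,0,0]]
noncomputable def C2 : Matrix (Fin 2) (Fin 4) ℝ := ![![0,0,0,0], ![0,1,0,0]]
noncomputable def R2 : Matrix (Fin 2) (Fin 4) ℝ := ![![0,0,1,0], ![0,0,0,1]]
noncomputable def A3 : Matrix (Fin 4) (Fin 6) ℝ :=
  ![![1,0,0,0,0,0], ![0,0,0,0,0,0], ![0,1,0,0,1,-1], ![0,0,0,0,2,-2]]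
noncomputable def R3 : Matrix (Fin 4) (Fin 6) ℝ :=
  ![![0,0,0,0,0,0], ![0,0,0,1,0,0], ![0,0,1,0,-1,1], ![0,0,0,0,0,0]]
noncomputable def A4 : Matrix (Fin 6) (Fin 4) ℝ :=
  ![![0,0,0,0], ![0,0,-2,2], ![0,0,3,-3], ![0,0,6,-6], ![1,0,0,0], ![0,1,0,0]]
noncomputable def R4 : Matrix (Fin 6) (Fin 4) ℝ :=
  ![![0,0,0,0], ![0,0,0,0], ![0,0,-1,1], ![0,0,0,0], ![0,0,0,0], ![0,0,0,0]]
noncomputable def A5 : Matrix (Fin 4) (Fin 1) ℝ := ![![1],![1],![1],![1]]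

noncomputable def matA : (i : ℕ) → Matrix (Fin (dims i)) (Fin (dims (i+1))) ℝ
  | 0 => 0 | 1 => A1 | 2 => A2 | 3 => A3 | 4 => A4 | 5 => A5 | (_+6) => 0
noncomputable def matC : (i : ℕ) → Matrix (Fin (dims i)) (Fin (dims (i+1))) ℝ
  | 1 => C1 | 2 => C2 | _ => 0
noncomputable def matR : (i : ℕ) → Matrix (Fin (dims i)) (Fin (dims (i+1))) ℝ
  | 2 => R2 | 3 => R3 | 4 => R4 | _ => 0
noncomputable def matb : (i : ℕ) → (Fin (dims (i+1)) → ℝ)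
  | 0 => ![1] | _ => 0

@[reducible] noncomputable def NN : ACRGNN 0 6 where
  dims := dims
  dims_zero := rfl
  agg := fun i => sumAgg (dims i)
  read := fun i => sumAgg (dims i)
  comb := fun i x1 x2 x3 j =>
    max 0 (Matrix.vecMul x1 (matA i) j + Matrix.vecMul x2 (matC i) j
      + Matrix.vecMul x3 (matR i) j + matb i j)
  cls := fun x => decide (0 ≤ ∑ j, (fun _ : Fin (dims 6) => (-1:ℝ)) j * x j + 0)

theorem NN_simple : NN.IsSimple :=
  ⟨fun _ => rfl, fun _ => rfl,
   fun i => ⟨matA i, matC i, matR i, matb i, fun _ _ _ _ => rfl⟩,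
   rfl, ⟨fun _ => -1, 0, fun _ => rfl⟩⟩

end S6

namespace S6
open Matrix Finset

variable (G : FGraph 0)

open Classical in
noncomputable def Dv (v : G.V) : Finset G.V := Finset.univ.filter (fun u => G.E v u)

noncomputable def dR (v : G.V) : ℝ := ((Dv G v).card : ℝ)
noncomputable def sR (v : G.V) : ℝ := ∑ u ∈ Dv G v, dR G u
noncomputable def nR : ℝ := (Fintype.card G.V : ℝ)
noncomputable def mR : ℝ := ∑ v, dR G v
noncomputable def TR : ℝ := ∑ v, sR G v
noncomputable def q1a : ℝ := max 0 (2*mR G - nR G^2 + nR G)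
noncomputable def q1b : ℝ := max 0 (nR G^2 - nR G - 2*mR G)
noncomputable def q2a : ℝ := max 0 (6*TR G + 3*nR G^2 - nR G^3 - 2*nR G)
noncomputable def q2b : ℝ := max 0 (nR G^3 + 2*nR G - 6*TR G - 3*nR G^2)

lemma sumAgg_map {α : Type} (S : Finset α) {k : ℕ} (g : α → Fin k → ℝ) :
    sumAgg k (S.val.map g) = fun j => ∑ u ∈ S, g u j := by
  funext j
  simp only [sumAgg, Multiset.map_map]
  rfl


lemma dR_nonneg (v : G.V) : 0 ≤ dR G v := Nat.cast_nonneg _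
lemma sR_nonneg (v : G.V) : 0 ≤ sR G v := Finset.sum_nonneg fun u _ => dR_nonneg G u

lemma sum_d2 (f : Fin (dims 2) → ℝ) : ∑ i, f i = ∑ i : Fin 2, f i := rfl
lemma sum_d3 (f : Fin (dims 3) → ℝ) : ∑ i, f i = ∑ i : Fin 4, f i := rfl
lemma sum_d4 (f : Fin (dims 4) → ℝ) : ∑ i, f i = ∑ i : Fin 6, f i := rfl
lemma sum_d5 (f : Fin (dims 5) → ℝ) : ∑ i, f i = ∑ i : Fin 4, f i := rfl

lemma emb_step (i : ℕ) : NN.emb G (i+1) = fun v j =>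
    max 0 (Matrix.vecMul (NN.emb G i v) (matA i) j
      + Matrix.vecMul (fun j' => ∑ u ∈ Dv G v, NN.emb G i u j') (matC i) j
      + Matrix.vecMul (fun j' => ∑ u, NN.emb G i u j') (matR i) j + matb i j) := by
  funext v
  rw [ACRGNN.emb.eq_2]
  show NN.comb i _ (sumAgg (dims i) _) (sumAgg (dims i) _) = _
  rw [sumAgg_map, sumAgg_map]
  rfl

lemma embL1 : NN.emb G 1 = fun _ _ => 1 := by
  rw [show NN.emb G 1 = _ from emb_step G 0]
  funext v j
  simp [matA, matC, matR, matb, Matrix.vecMul, dotProduct]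

lemma embL2 : NN.emb G 2 = fun v => ![1, dR G v] := by
  rw [show NN.emb G 2 = _ from emb_step G 1, embL1]
  funext v j
  fin_cases j <;>
    simp [dims, matA, matC, matR, matb, A1, C1, Matrix.vecMul, dotProduct,
      Fin.sum_univ_succ, dR, nR] <;>
    first
      | rfl
      | positivity
      | exact le_max_left _ _
      | exact Finset.sum_nonneg fun u _ => dR_nonneg G u
      | exact Finset.sum_nonneg fun u _ => sR_nonneg G u
      | exact sup_eq_right.mpr (by positivity)
      | exact max_eq_right (by positivity)
      | (ring_nf; try rfl; try exact sup_eq_right.mpr (by positivity);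
         try exact max_eq_right (by positivity))
      | ring_nf

lemma embL3 : NN.emb G 3 = fun v => ![1, sR G v, nR G, mR G] := by
  rw [show NN.emb G 3 = _ from emb_step G 2, embL2]
  funext v j
  fin_cases j <;>
    simp [sum_d2, dims, matA, matC, matR, matb, A2, C2, R2, Matrix.vecMul, dotProduct,
      Fin.sum_univ_succ, dR, sR, nR, mR] <;>
    first
      | rfl
      | positivity
      | exact le_max_left _ _
      | exact Finset.sum_nonneg fun u _ => dR_nonneg G u
      | exact Finset.sum_nonneg fun u _ => sR_nonneg G u
      | exact sup_eq_right.mpr (by positivity)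
      | exact max_eq_right (by positivity)
      | (ring_nf; try rfl; try exact sup_eq_right.mpr (by positivity);
         try exact max_eq_right (by positivity))
      | ring_nf

lemma embL4 : NN.emb G 4 = fun _ => ![1, nR G, nR G^2, TR G, q1a G, q1b G] := by
  rw [show NN.emb G 4 = _ from emb_step G 3, embL3]
  funext v j
  fin_cases j <;>
    simp [sum_d3, dims, matA, matC, matR, matb, A3, R3, Matrix.vecMul, dotProduct,
      Fin.sum_univ_succ, nR, mR, TR, q1a, q1b] <;>
    first
      | rfl
      | positivity
      | exact le_max_left _ _
      | exact Finset.sum_nonneg fun u _ => dR_nonneg G u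
      | exact Finset.sum_nonneg fun u _ => sR_nonneg G u
      | exact sup_eq_right.mpr (by positivity)
      | exact max_eq_right (by positivity)
      | (ring_nf; try rfl; try exact sup_eq_right.mpr (by positivity);
         try exact max_eq_right (by positivity))
      | ring_nf

lemma embL5 : NN.emb G 5 = fun _ => ![q1a G, q1b G, q2a G, q2b G] := by
  rw [show NN.emb G 5 = _ from emb_step G 4, embL4]
  funext v j
  fin_cases j <;>
    simp [sum_d4, dims, matA, matC, matR, matb, A4, R4, Matrix.vecMul, dotProduct,
      Fin.sum_univ_succ, nR, TR, q2a, q2b] <;>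
    first
      | rfl
      | positivity
      | exact le_max_left _ _
      | exact Finset.sum_nonneg fun u _ => dR_nonneg G u
      | exact Finset.sum_nonneg fun u _ => sR_nonneg G u
      | exact sup_eq_right.mpr (by positivity)
      | exact max_eq_right (by positivity)
      | (ring_nf; try rfl; try exact sup_eq_right.mpr (by positivity);
         try exact max_eq_right (by positivity))
      | ring_nf

lemma embL6 : NN.emb G 6 = fun _ _ => q1a G + q1b G + q2a G + q2b G := by
  rw [show NN.emb G 6 = _ from emb_step G 5, embL5]
  funext v j
  have h1 : 0 ≤ q1a G := le_max_left _ _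
  have h2 : 0 ≤ q1b G := le_max_left _ _
  have h3 : 0 ≤ q2a G := le_max_left _ _
  have h4 : 0 ≤ q2b G := le_max_left _ _
  fin_cases j
  simp [sum_d5, dims, matA, matC, matR, matb, A5, Matrix.vecMul, dotProduct, Fin.sum_univ_succ]
  have hq : (0:ℝ) ≤ q1a G + (q1b G + (q2a G + q2b G)) := by linarith
  rw [sup_eq_right.mpr hq]; ring

lemma accepts_iff (v : G.V) : NN.accepts G v = true ↔
    (2*mR G = nR G^2 - nR G ∧ 6*TR G + 3*nR G^2 = nR G^3 + 2*nR G) := by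
  have h1 : 0 ≤ q1a G := le_max_left _ _
  have h2 : 0 ≤ q1b G := le_max_left _ _
  have h3 : 0 ≤ q2a G := le_max_left _ _
  have h4 : 0 ≤ q2b G := le_max_left _ _
  have hacc : NN.accepts G v = decide
      (0 ≤ ∑ j : Fin 1, (-1:ℝ) * (q1a G + q1b G + q2a G + q2b G) + 0) := by
    show NN.cls _ = _
    rw [embL6]; rfl
  rw [hacc]
  simp only [Fin.sum_univ_one, decide_eq_true_eq]
  constructor
  · intro h
    have e1 : q1a G = 0 := by linarith
    have e2 : q1b G = 0 := by linarith
    have e3 : q2a G = 0 := by linarith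
    have e4 : q2b G = 0 := by linarith
    rw [q1a, max_eq_left_iff] at e1
    rw [q1b, max_eq_left_iff] at e2
    rw [q2a, max_eq_left_iff] at e3
    rw [q2b, max_eq_left_iff] at e4
    constructor <;> linarith
  · rintro ⟨e1, e2⟩
    have z1 : q1a G = 0 := by rw [q1a, max_eq_left] ; linarith
    have z2 : q1b G = 0 := by rw [q1b, max_eq_left] ; linarith
    have z3 : q2a G = 0 := by rw [q2a, max_eq_left] ; linarith
    have z4 : q2b G = 0 := by rw [q2b, max_eq_left] ; linarith
    rw [z1, z2, z3, z4]
    norm_num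

end S6

open Finset

lemma exch_le {V : Type} [DecidableEq V] (f : V → ℕ) (S S₀ : Finset V)
    (hc : S₀.card = S.card)
    (h : ∀ x ∈ S₀ \ S, ∀ u ∈ S \ S₀, f x ≤ f u) :
    ∑ x ∈ S₀, f x ≤ ∑ u ∈ S, f u := by
  have hd : (S₀ \ S).card = (S \ S₀).card := by
    have h1 := Finset.card_sdiff_add_card_inter S₀ S
    have h2 := Finset.card_sdiff_add_card_inter S S₀
    rw [Finset.inter_comm] at h2
    omega
  have key : ∑ x ∈ S₀ \ S, f x ≤ ∑ u ∈ S \ S₀, f u := by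
    rcases (S \ S₀).eq_empty_or_nonempty with he | hne
    · have h0 : (S₀ \ S) = ∅ := Finset.card_eq_zero.mp (by rw [hd, he]; simp)
      simp [h0, he]
    · obtain ⟨u0, hu0, hmin⟩ := Finset.exists_min_image (S \ S₀) f hne
      calc ∑ x ∈ S₀ \ S, f x ≤ (S₀ \ S).card • f u0 :=
            Finset.sum_le_card_nsmul _ _ _ (fun x hx => h x hx u0 hu0)
        _ = (S \ S₀).card • f u0 := by rw [hd]
        _ ≤ ∑ u ∈ S \ S₀, f u := Finset.card_nsmul_le_sum _ _ _ hmin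
  have e1 : ∑ x ∈ S₀, f x = ∑ x ∈ S₀ \ S, f x + ∑ x ∈ S₀ ∩ S, f x := by
    rw [← Finset.sum_union (Finset.disjoint_sdiff_inter _ _), Finset.sdiff_union_inter]
  have e2 : ∑ x ∈ S, f x = ∑ x ∈ S \ S₀, f x + ∑ x ∈ S ∩ S₀, f x := by
    rw [← Finset.sum_union (Finset.disjoint_sdiff_inter _ _), Finset.sdiff_union_inter]
  rw [e1, e2, Finset.inter_comm]
  omega

lemma exch_lt {V : Type} [DecidableEq V] (f : V → ℕ) (S S₀ : Finset V)
    (hc : S₀.card = S.card) (hne : S ≠ S₀)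
    (h : ∀ x ∈ S₀ \ S, ∀ u ∈ S \ S₀, f x < f u) :
    ∑ x ∈ S₀, f x < ∑ u ∈ S, f u := by
  have hd : (S₀ \ S).card = (S \ S₀).card := by
    have h1 := Finset.card_sdiff_add_card_inter S₀ S
    have h2 := Finset.card_sdiff_add_card_inter S S₀
    rw [Finset.inter_comm] at h2
    omega
  have hSne : (S \ S₀).Nonempty := by
    rw [Finset.sdiff_nonempty]
    intro hsub
    exact hne (Finset.eq_of_subset_of_card_le hsub (le_of_eq hc))
  obtain ⟨u0, hu0, hmin⟩ := Finset.exists_min_image (S \ S₀) f hSne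
  have key : ∑ x ∈ S₀ \ S, f x < ∑ u ∈ S \ S₀, f u := by
    have h1 : ∑ x ∈ S₀ \ S, (f x + 1) ≤ (S₀ \ S).card • (f u0) :=
      Finset.sum_le_card_nsmul _ _ _ (fun x hx => h x hx u0 hu0)
    have h2 : (S \ S₀).card • f u0 ≤ ∑ u ∈ S \ S₀, f u :=
      Finset.card_nsmul_le_sum _ _ _ hmin
    rw [hd] at h1
    have h3 : ∑ x ∈ S₀ \ S, (f x + 1) = ∑ x ∈ S₀ \ S, f x + (S₀ \ S).card := by
      rw [Finset.sum_add_distrib, Finset.sum_const, smul_eq_mul, mul_one]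
    have h4 : 0 < (S₀ \ S).card := by
      rw [hd]; exact Finset.card_pos.mpr hSne
    rw [h3, hd] at h1
    omega
  have e1 : ∑ x ∈ S₀, f x = ∑ x ∈ S₀ \ S, f x + ∑ x ∈ S₀ ∩ S, f x := by
    rw [← Finset.sum_union (Finset.disjoint_sdiff_inter _ _), Finset.sdiff_union_inter]
  have e2 : ∑ x ∈ S, f x = ∑ x ∈ S \ S₀, f x + ∑ x ∈ S ∩ S₀, f x := by
    rw [← Finset.sum_union (Finset.disjoint_sdiff_inter _ _), Finset.sdiff_union_inter]
  rw [e1, e2, Finset.inter_comm]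
  omega

lemma gaussZ (n : ℕ) : 2 * ∑ i ∈ range n, (i : ℤ) = (n:ℤ)^2 - n := by
  induction n with
  | zero => simp
  | succ k ih => rw [Finset.sum_range_succ, mul_add, ih]; push_cast; ring

lemma cubeZ (n : ℕ) : 6 * ∑ j ∈ range n, ((n:ℤ) - 1 - (j:ℤ)) * (j:ℤ)
    = (n:ℤ)^3 - 3*(n:ℤ)^2 + 2*(n:ℤ) := by
  induction n with
  | zero => simp
  | succ k ih =>
    have hg := gaussZ k
    rw [Finset.sum_range_succ]
    have hcongr : ∀ j ∈ range k, (((k:ℕ)+1:ℤ) - 1 - (j:ℤ)) * (j:ℤ)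
        = ((k:ℤ) - 1 - (j:ℤ)) * (j:ℤ) + (j:ℤ) := fun j _ => by push_cast; ring
    rw [show ((k+1 : ℕ):ℤ) = (k:ℤ)+1 by push_cast; ring] at *
    rw [Finset.sum_congr rfl hcongr, Finset.sum_add_distrib]
    push_cast
    push_cast at ih
    nlinarith [ih, hg]

lemma sumsigmaZ (n : ℕ) (f : ℕ → ℤ) :
    ∑ j ∈ range n, ∑ i ∈ range j, f i = ∑ i ∈ range n, ((n:ℤ) - 1 - (i:ℤ)) * f i := by
  induction n with
  | zero => simp
  | succ k ih =>
    rw [Finset.sum_range_succ, ih, Finset.sum_range_succ]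
    have hcongr : ∀ i ∈ range k, (((k:ℤ) + 1) - 1 - (i:ℤ)) * f i
        = ((k:ℤ) - 1 - (i:ℤ)) * f i + f i := fun i _ => by ring
    push_cast
    rw [Finset.sum_congr rfl hcongr, Finset.sum_add_distrib]
    push_cast
    ring

lemma NUM (n : ℕ) (a : ℕ → ℕ)
    (mono : ∀ i j : ℕ, i ≤ j → j < n → a i ≤ a j)
    (hle : ∀ j, j < n → a j ≤ n)
    (hsum : 2 * (∑ i ∈ range n, (a i : ℤ)) = (n:ℤ)^2 - n) :
    (n:ℤ)^3 - 3*(n:ℤ)^2 + 2*(n:ℤ) + 6 * ∑ j ∈ range n, ((a j : ℤ) - (j:ℤ))^2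
      ≤ 6 * ∑ j ∈ range n, ∑ i ∈ range (a j), (a i : ℤ) := by
  have hstep : ∀ j ∈ range n,
      (∑ i ∈ range j, (a i:ℤ)) + ((a j:ℤ) - (j:ℤ)) * (a j:ℤ) ≤ ∑ i ∈ range (a j), (a i:ℤ) := by
    intro j hj
    rw [Finset.mem_range] at hj
    rcases le_or_gt j (a j) with h | h
    · have hsplit : ∑ i ∈ range j, (a i:ℤ) + ∑ i ∈ Ico j (a j), (a i:ℤ)
          = ∑ i ∈ range (a j), (a i:ℤ) := by
        simp only [Finset.range_eq_Ico]
        exact Finset.sum_Ico_consecutive _ (Nat.zero_le _) h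
      have hbound : ((Ico j (a j)).card) • (a j:ℤ) ≤ ∑ i ∈ Ico j (a j), (a i:ℤ) := by
        apply Finset.card_nsmul_le_sum
        intro i hi
        rw [Finset.mem_Ico] at hi
        exact_mod_cast mono j i hi.1 (lt_of_lt_of_le hi.2 (hle j hj))
      rw [Nat.card_Ico, nsmul_eq_mul, Nat.cast_sub h] at hbound
      push_cast at hbound
      nlinarith [hsplit, hbound]
    · have hsplit : ∑ i ∈ range (a j), (a i:ℤ) + ∑ i ∈ Ico (a j) j, (a i:ℤ)
          = ∑ i ∈ range j, (a i:ℤ) := by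
        simp only [Finset.range_eq_Ico]
        exact Finset.sum_Ico_consecutive _ (Nat.zero_le _) (le_of_lt h)
      have hbound : ∑ i ∈ Ico (a j) j, (a i:ℤ) ≤ ((Ico (a j) j).card) • (a j:ℤ) := by
        apply Finset.sum_le_card_nsmul
        intro i hi
        rw [Finset.mem_Ico] at hi
        exact_mod_cast mono i j (le_of_lt hi.2) hj
      rw [Nat.card_Ico, nsmul_eq_mul, Nat.cast_sub (le_of_lt h)] at hbound
      push_cast at hbound
      nlinarith [hsplit, hbound]
  have hsum_steps := Finset.sum_le_sum hstep
  rw [Finset.sum_add_distrib] at hsum_steps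
  have hsig := sumsigmaZ n (fun i => (a i:ℤ))
  have hpoint : ∀ j ∈ range n,
      ((a j:ℤ) - (j:ℤ)) * (a j:ℤ) + ((n:ℤ) - 1 - (j:ℤ)) * (a j:ℤ)
        = ((a j:ℤ) - (j:ℤ))^2 + ((n:ℤ)-1) * ((a j:ℤ) - (j:ℤ)) + ((n:ℤ)-1-(j:ℤ)) * (j:ℤ) :=
    fun j _ => by ring
  have he : ∑ j ∈ range n, ((a j:ℤ) - (j:ℤ)) = 0 := by
    rw [Finset.sum_sub_distrib]
    have hg := gaussZ n
    linarith [hsum]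
  have hadd : ∑ j ∈ range n, (((a j:ℤ) - (j:ℤ)) * (a j:ℤ) + ((n:ℤ) - 1 - (j:ℤ)) * (a j:ℤ))
      = ∑ j ∈ range n, ((a j:ℤ) - (j:ℤ)) * (a j:ℤ)
        + ∑ j ∈ range n, ((n:ℤ) - 1 - (j:ℤ)) * (a j:ℤ) := Finset.sum_add_distrib
  have hsplit2 : ∑ j ∈ range n, (((a j:ℤ) - (j:ℤ)) * (a j:ℤ) + ((n:ℤ) - 1 - (j:ℤ)) * (a j:ℤ))
      = ∑ j ∈ range n, ((a j:ℤ) - (j:ℤ))^2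
        + ((n:ℤ)-1) * ∑ j ∈ range n, ((a j:ℤ) - (j:ℤ))
        + ∑ j ∈ range n, ((n:ℤ)-1-(j:ℤ)) * (j:ℤ) := by
    rw [Finset.sum_congr rfl hpoint, Finset.sum_add_distrib, Finset.sum_add_distrib,
      Finset.mul_sum]
  rw [he, mul_zero, add_zero] at hsplit2
  have hW := cubeZ n
  linarith [hsum_steps, hsig, hadd, hsplit2, hW]


namespace S6
open Finset

section Main
variable (G : FGraph 0)

noncomputable def dN (v : G.V) : ℕ := (Dv G v).card
noncomputable def nN : ℕ := Fintype.card G.V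

lemma dN_le (v : G.V) : dN G v ≤ nN G := Finset.card_le_univ _

lemma mem_Dv {v u : G.V} : u ∈ Dv G v ↔ G.E v u := by
  classical
  simp [Dv]

/-- Transfer a filtered sum over vertices to a sum over `range k`, via a bijection. -/
lemma trans_sum (β : G.V ≃ Fin (nN G)) (f : G.V → ℤ) (k : ℕ) (hk : k ≤ nN G) :
    ∑ u ∈ univ.filter (fun u => (β u).val < k), f u
      = ∑ i ∈ range k, (if h : i < nN G then f (β.symm ⟨i, h⟩) else 0) := by
  classical
  rw [Finset.sum_filter]
  have step1 : ∑ u, (if (β u).val < k then f u else 0)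
      = ∑ j : Fin (nN G), (fun i : ℕ => if i < k then (if h : i < nN G then f (β.symm ⟨i, h⟩) else 0) else 0) (j : ℕ) := by
    apply Fintype.sum_equiv β
    intro u
    simp [Fin.eta]
  rw [step1, Fin.sum_univ_eq_sum_range
    (fun i : ℕ => if i < k then (if h : i < nN G then f (β.symm ⟨i, h⟩) else 0) else 0)]
  rw [← Finset.sum_filter]
  have hfil : (range (nN G)).filter (fun i => i < k) = range k := by
    ext i; simp only [Finset.mem_filter, Finset.mem_range]; omega
  rw [hfil]

lemma card_filter_lt (β : G.V ≃ Fin (nN G)) (k : ℕ) (hk : k ≤ nN G) :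
    (univ.filter (fun u => (β u).val < k)).card = k := by
  classical
  have h1 : ((univ.filter (fun u => (β u).val < k)).card : ℤ)
      = ∑ u ∈ univ.filter (fun u => (β u).val < k), (1:ℤ) := by
    rw [Finset.card_eq_sum_ones]; push_cast; ring
  rw [trans_sum G β (fun _ => (1:ℤ)) k hk] at h1
  have h2 : ∑ i ∈ range k, (if h : i < nN G then (1:ℤ) else 0) = (k:ℤ) := by
    rw [Finset.sum_congr rfl (fun i hi => dif_pos (lt_of_lt_of_le (Finset.mem_range.mp hi) hk))]
    simp
  rw [h2] at h1
  exact_mod_cast h1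

lemma main_fwd
    (h1 : 2 * ∑ v, (dN G v : ℤ) = (nN G : ℤ)^2 - (nN G : ℤ))
    (h2 : 6 * ∑ v, ∑ u ∈ Dv G v, (dN G u : ℤ) + 3*(nN G : ℤ)^2
        = (nN G : ℤ)^3 + 2*(nN G : ℤ)) :
    IsSLO G.E := by
  classical
  set n := nN G with hn_def
  let e0 := Fintype.equivFin G.V
  let g : Fin n → ℕ := fun j => dN G (e0.symm j)
  let τ := Tuple.sort g
  let ρ : G.V ≃ Fin n := e0.trans τ.symm
  have hρsymm : ∀ j : Fin n, dN G (ρ.symm j) = g (τ j) := fun j => rfl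
  let a : ℕ → ℕ := fun i => if h : i < n then g (τ ⟨i, h⟩) else 0
  have ha : ∀ v, dN G v = a ((ρ v) : ℕ) := by
    intro v
    simp only [a, dif_pos (ρ v).isLt, Fin.eta]
    show dN G v = g (τ (τ.symm (e0 v)))
    erw [Equiv.apply_symm_apply]
    show dN G v = dN G (e0.symm (e0 v))
    rw [Equiv.symm_apply_apply]
  have hmono : ∀ i j, i ≤ j → j < n → a i ≤ a j := by
    intro i j hij hj
    have hi : i < n := lt_of_le_of_lt hij hj
    simp only [a, dif_pos hi, dif_pos hj]
    exact Tuple.monotone_sort g (show (⟨i, hi⟩ : Fin n) ≤ ⟨j, hj⟩ from hij)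
  have hle : ∀ j, j < n → a j ≤ n := by
    intro j hj
    simp only [a, dif_pos hj]
    exact dN_le G _
  have hdite : ∀ i, (if h : i < n then ((dN G (ρ.symm ⟨i, h⟩)) : ℤ) else 0) = (a i : ℤ) := by
    intro i
    by_cases h : i < n
    · rw [dif_pos h]
      have : dN G (ρ.symm ⟨i, h⟩) = a ((ρ (ρ.symm ⟨i, h⟩)) : ℕ) := ha _
      rw [this, Equiv.apply_symm_apply]
    · rw [dif_neg h]
      simp only [a, dif_neg h]
      simp
  -- σNat
  let S₀ : ℕ → Finset G.V := fun k => univ.filter (fun u => (ρ u).val < k)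
  have hσ : ∀ k, k ≤ n → ∑ u ∈ S₀ k, (dN G u : ℤ) = ∑ i ∈ range k, (a i : ℤ) := by
    intro k hk
    rw [trans_sum G ρ (fun u => (dN G u : ℤ)) k hk]
    exact Finset.sum_congr rfl (fun i _ => hdite i)
  -- exchange inequality per vertex
  have hcard : ∀ w, (S₀ (dN G w)).card = (Dv G w).card := by
    intro w
    rw [card_filter_lt G ρ (dN G w) (dN_le G w)]
    rfl
  have hexch : ∀ w, ∑ u ∈ S₀ (dN G w), dN G u ≤ ∑ u ∈ Dv G w, dN G u := by
    intro w
    apply exch_le (dN G) (Dv G w) (S₀ (dN G w)) (hcard w)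
    intro x hx u hu
    rw [Finset.mem_sdiff] at hx hu
    have hxlt : (ρ x).val < dN G w := (Finset.mem_filter.mp hx.1).2
    have hule : dN G w ≤ (ρ u).val := by
      by_contra hc
      push_neg at hc
      exact hu.2 (Finset.mem_filter.mpr ⟨Finset.mem_univ u, hc⟩)
    have hord : (ρ x).val ≤ (ρ u).val := by omega
    rw [ha x, ha u]
    exact hmono _ _ hord (ρ u).isLt
  -- global sums
  have hFT : ∑ w, ∑ u ∈ S₀ (dN G w), dN G u ≤ ∑ w, ∑ u ∈ Dv G w, dN G u :=
    Finset.sum_le_sum (fun w _ => hexch w)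
  -- cast to ℤ and reindex F
  have hFcast : ((∑ w, ∑ u ∈ S₀ (dN G w), dN G u : ℕ) : ℤ)
      = ∑ j ∈ range n, ∑ i ∈ range (a j), (a i : ℤ) := by
    push_cast
    have hstep : ∀ w : G.V, ∑ u ∈ S₀ (dN G w), ((dN G u : ℤ))
        = ∑ i ∈ range (a ((ρ w) : ℕ)), (a i : ℤ) := by
      intro w
      rw [hσ (dN G w) (dN_le G w), ha w]
    rw [Finset.sum_congr rfl (fun w _ => hstep w)]
    rw [Fintype.sum_equiv ρ _ (fun j : Fin n => ∑ i ∈ range (a (j : ℕ)), (a i : ℤ)) (fun w => rfl)]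
    exact Fin.sum_univ_eq_sum_range (fun j => ∑ i ∈ range (a j), (a i : ℤ)) n
  have hTcast : ((∑ w, ∑ u ∈ Dv G w, dN G u : ℕ) : ℤ) = ∑ v, ∑ u ∈ Dv G v, (dN G u : ℤ) := by
    push_cast; rfl
  -- the m sum
  have hmsum : 2 * (∑ i ∈ range n, (a i : ℤ)) = (n:ℤ)^2 - n := by
    have hfull : S₀ n = univ := by
      apply Finset.eq_univ_iff_forall.mpr
      intro u
      exact Finset.mem_filter.mpr ⟨Finset.mem_univ _, (ρ u).isLt⟩
    have := hσ n le_rfl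
    rw [hfull] at this
    rw [← this]
    exact h1
  -- apply NUM
  have hnum := NUM n a hmono hle hmsum
  -- combine
  have hK : ∑ j ∈ range n, ((a j : ℤ) - (j:ℤ))^2 ≤ 0 := by
    have hi1 : ((∑ w, ∑ u ∈ S₀ (dN G w), dN G u : ℕ) : ℤ)
        ≤ ((∑ w, ∑ u ∈ Dv G w, dN G u : ℕ) : ℤ) := by exact_mod_cast hFT
    rw [hFcast, hTcast] at hi1
    linarith [hnum, h2, hi1]
  have hK0 : ∀ j ∈ range n, ((a j : ℤ) - (j:ℤ))^2 = 0 := by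
    rw [← Finset.sum_eq_zero_iff_of_nonneg (fun j _ => sq_nonneg _)]
    have : 0 ≤ ∑ j ∈ range n, ((a j : ℤ) - (j:ℤ))^2 :=
      Finset.sum_nonneg (fun j _ => sq_nonneg _)
    omega
  have haj : ∀ j, j < n → a j = j := by
    intro j hj
    have := hK0 j (Finset.mem_range.mpr hj)
    have h' : (a j : ℤ) = (j : ℤ) := by nlinarith [this]
    exact_mod_cast h'
  have hdv : ∀ v, dN G v = ((ρ v) : ℕ) := by
    intro v
    rw [ha v, haj _ (ρ v).isLt]
  -- equality of sums forces per-vertex equality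
  have hFeqT : ∑ w, ∑ u ∈ S₀ (dN G w), dN G u = ∑ w, ∑ u ∈ Dv G w, dN G u := by
    have hi2 : ((∑ w, ∑ u ∈ Dv G w, dN G u : ℕ) : ℤ)
        ≤ ((∑ w, ∑ u ∈ S₀ (dN G w), dN G u : ℕ) : ℤ) := by
      rw [hFcast, hTcast]
      have hKz : ∑ j ∈ range n, ((a j : ℤ) - (j:ℤ))^2 = 0 :=
        le_antisymm hK (Finset.sum_nonneg (fun j _ => sq_nonneg _))
      linarith [hnum, h2, hKz]
    have hi1 : ((∑ w, ∑ u ∈ S₀ (dN G w), dN G u : ℕ) : ℤ)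
        ≤ ((∑ w, ∑ u ∈ Dv G w, dN G u : ℕ) : ℤ) := by exact_mod_cast hFT
    exact_mod_cast le_antisymm hi1 hi2
  have hper : ∀ w, ∑ u ∈ S₀ (dN G w), dN G u = ∑ u ∈ Dv G w, dN G u := by
    intro w
    have := (Finset.sum_eq_sum_iff_of_le (fun w _ => hexch w)).mp hFeqT
    exact this w (Finset.mem_univ w)
  -- sets equal
  have hsets : ∀ w, Dv G w = S₀ (dN G w) := by
    intro w
    by_contra hne
    have hstrict : ∀ x ∈ S₀ (dN G w) \ Dv G w, ∀ u ∈ Dv G w \ S₀ (dN G w), dN G x < dN G u := by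
      intro x hx u hu
      rw [Finset.mem_sdiff] at hx hu
      have hxlt : (ρ x).val < dN G w := (Finset.mem_filter.mp hx.1).2
      have hule : dN G w ≤ (ρ u).val := by
        by_contra hc
        push_neg at hc
        exact hu.2 (Finset.mem_filter.mpr ⟨Finset.mem_univ u, hc⟩)
      rw [hdv x, hdv u]
      omega
    have hlt := exch_lt (dN G) (Dv G w) (S₀ (dN G w)) (hcard w) hne hstrict
    have := hper w
    omega
  have hEdge : ∀ w u, G.E w u ↔ dN G u < dN G w := by
    intro w u
    rw [← mem_Dv G, hsets w]
    simp only [S₀, Finset.mem_filter, Finset.mem_univ, true_and]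
    rw [hdv u]
  refine ⟨?_, ?_, ?_⟩
  · intro v hv
    rw [hEdge] at hv
    omega
  · intro u v w huv hvw
    rw [hEdge] at *
    omega
  · intro u v huv
    have : (ρ u) ≠ (ρ v) := fun hc => huv (ρ.injective hc)
    have hval : ((ρ u) : ℕ) ≠ ((ρ v) : ℕ) := fun hc => this (Fin.ext hc)
    rw [hEdge, hEdge, hdv u, hdv v]
    omega

end Main
end S6

namespace S6
open Finset

section Back
variable (G : FGraph 0)

lemma slo_edge_iff (h : IsSLO G.E) : ∀ v u, G.E v u → dN G u < dN G v := by
  classical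
  intro v u hvu
  have hsub : Dv G u ⊆ Dv G v := by
    intro w hw
    rw [mem_Dv] at hw ⊢
    exact h.2.1 _ _ _ hvu hw
  have hmem : u ∈ Dv G v := (mem_Dv G).mpr hvu
  have hnmem : u ∉ Dv G u := by
    rw [mem_Dv]
    exact h.1 u
  exact Finset.card_lt_card ⟨hsub, fun hc => hnmem (hc hmem)⟩

lemma slo_Dv (h : IsSLO G.E) (v : G.V) :
    Dv G v = univ.filter (fun u => dN G u < dN G v) := by
  classical
  ext u
  rw [mem_Dv, Finset.mem_filter]
  constructor
  · intro hvu
    exact ⟨Finset.mem_univ u, slo_edge_iff G h v u hvu⟩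
  · rintro ⟨-, hlt⟩
    have hne : u ≠ v := fun hc => by rw [hc] at hlt; omega
    rcases h.2.2 u v hne with hEuv | hEvu
    · have := slo_edge_iff G h u v hEuv
      omega
    · exact hEvu

lemma slo_d_lt (h : IsSLO G.E) (v : G.V) : dN G v < nN G := by
  classical
  have hsub : Dv G v ⊆ univ.erase v := by
    intro u hu
    rw [mem_Dv] at hu
    apply Finset.mem_erase.mpr
    exact ⟨fun hc => h.1 v (hc ▸ hu), Finset.mem_univ u⟩
  have hcard := Finset.card_le_card hsub
  rw [Finset.card_erase_of_mem (Finset.mem_univ v), Finset.card_univ] at hcard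
  have hpos : 0 < Fintype.card G.V := @Fintype.card_pos _ _ G.nonemptyV
  unfold dN nN
  omega

lemma slo_d_inj (h : IsSLO G.E) : Function.Injective (dN G) := by
  intro u v huv
  by_contra hne
  rcases h.2.2 u v hne with hE | hE
  · have := slo_edge_iff G h u v hE; omega
  · have := slo_edge_iff G h v u hE; omega

lemma slo_eqs (h : IsSLO G.E) :
    2 * ∑ v, (dN G v : ℤ) = (nN G : ℤ)^2 - (nN G : ℤ) ∧
    6 * ∑ v, ∑ u ∈ Dv G v, (dN G u : ℤ) + 3*(nN G : ℤ)^2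
        = (nN G : ℤ)^3 + 2*(nN G : ℤ) := by
  classical
  set n := nN G with hn_def
  let φ : G.V ≃ Fin n := Equiv.ofBijective (fun v => (⟨dN G v, slo_d_lt G h v⟩ : Fin n))
    ((Fintype.bijective_iff_injective_and_card _).mpr
      ⟨fun u v huv => slo_d_inj G h (congrArg Fin.val huv), by rw [Fintype.card_fin]; rfl⟩)
  have hφ : ∀ v, (φ v : ℕ) = dN G v := fun v => rfl
  have hφsymm : ∀ j : Fin n, dN G (φ.symm j) = (j : ℕ) := by
    intro j
    rw [← hφ (φ.symm j), Equiv.apply_symm_apply]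
  -- m
  have hm : ∑ v, (dN G v : ℤ) = ∑ i ∈ range n, (i : ℤ) := by
    rw [Fintype.sum_equiv φ _ (fun j : Fin n => ((j : ℕ) : ℤ))
      (fun v => by simp [hφ])]
    exact Fin.sum_univ_eq_sum_range (fun i => (i : ℤ)) n
  -- s_v
  have hs : ∀ v, ∑ u ∈ Dv G v, (dN G u : ℤ) = ∑ i ∈ range (dN G v), (i : ℤ) := by
    intro v
    rw [slo_Dv G h v]
    have := trans_sum G φ (fun u => (dN G u : ℤ)) (dN G v) (le_of_lt (slo_d_lt G h v))
    have hsame : (univ.filter (fun u => dN G u < dN G v))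
        = (univ.filter (fun u => (φ u).val < dN G v)) := by
      apply Finset.filter_congr
      intro u _
      rw [hφ u]
    rw [hsame, this]
    apply Finset.sum_congr rfl
    intro i hi
    rw [Finset.mem_range] at hi
    have hin : i < n := lt_trans hi (slo_d_lt G h v)
    rw [dif_pos hin]
    show ((dN G (φ.symm ⟨i, hin⟩) : ℤ)) = (i : ℤ)
    rw [hφsymm ⟨i, hin⟩]
  -- T
  have hT : ∑ v, ∑ u ∈ Dv G v, (dN G u : ℤ) = ∑ k ∈ range n, ∑ i ∈ range k, (i : ℤ) := by
    rw [Finset.sum_congr rfl (fun v _ => hs v)]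
    rw [Fintype.sum_equiv φ _ (fun j : Fin n => ∑ i ∈ range ((j : ℕ)), (i : ℤ))
      (fun v => by simp [hφ])]
    exact Fin.sum_univ_eq_sum_range (fun k => ∑ i ∈ range k, (i : ℤ)) n
  constructor
  · rw [hm]
    exact gaussZ n
  · rw [hT, sumsigmaZ n (fun i => (i : ℤ))]
    have := cubeZ n
    linarith

lemma core_iff :
    (2*mR G = nR G^2 - nR G ∧ 6*TR G + 3*nR G^2 = nR G^3 + 2*nR G) ↔ IsSLO G.E := by
  have cm : mR G = ((∑ v, (dN G v : ℤ) : ℤ) : ℝ) := by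
    unfold mR dR dN
    push_cast
    rfl
  have cT : TR G = ((∑ v, ∑ u ∈ Dv G v, (dN G u : ℤ) : ℤ) : ℝ) := by
    unfold TR sR dR dN
    push_cast
    rfl
  have cn : nR G = ((nN G : ℤ) : ℝ) := by
    unfold nR nN
    push_cast
    rfl
  rw [cm, cT, cn]
  constructor
  · rintro ⟨ha, hb⟩
    exact main_fwd G (by exact_mod_cast ha) (by exact_mod_cast hb)
  · intro h
    obtain ⟨ha, hb⟩ := slo_eqs G h
    constructor
    · exact_mod_cast ha
    · exact_mod_cast hb

end Back
end S6

/-- There is a simple 6-layer ACR-GNN with input dimension 0 that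
accepts a pointed `0`-featured directed graph `(G, v)` iff `G` is a strict
linear order. -/
theorem stmt6 :
    ∃ N : ACRGNN 0 6, N.IsSimple ∧
      ∀ (G : FGraph 0) (v : G.V), N.accepts G v = true ↔ IsSLO G.E := by
  refine ⟨S6.NN, S6.NN_simple, ?_⟩
  intro G v
  exact (S6.accepts_iff G v).trans (S6.core_iff G)
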